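/- Let r, s, n be positive integers with s ≤ r. Given a Gallai r-coloring of the edges of K_n using color set [r] = {1, ..., r}, the product of the chromatic numbers χ(G_S), taken over all subsets S ⊆ [r] with |S| = s, is at least n^{binom(r-1, s-1)}. -/

import Mathlib

open Finset

set_option linter.unusedSectionVars false

namespace GallaiWork

attribute [local instance] Classical.propDecidable

variable {r : ℕ}

section Defs

variable {V : Type} [Fintype V] [DecidableEq V]

/-- symmetry of a coloring -/
def Sym (c : V → V → Fin r) : Prop := ∀ u v, c u v = c v u

/-- no rainbow triangle -/
def NR (c : V → V → Fin r) : Prop :=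
  ∀ u v w : V, u ≠ v → v ≠ w → u ≠ w → (c u v = c v w ∨ c v w = c u w ∨ c u v = c u w)

/-- restriction of a coloring to a subtype -/
def res (c : V → V → Fin r) (p : V → Prop) : {v // p v} → {v // p v} → Fin r :=
  fun u v => c u v

/-- a (nontrivial or not) module -/
def IsModule (c : V → V → Fin r) (M : Finset V) : Prop :=
  ∀ v ∉ M, ∀ u ∈ M, ∀ u' ∈ M, c v u = c v u'

def TwoCol (c : V → V → Fin r) (a b : Fin r) : Prop :=
  ∀ u v : V, u ≠ v → c u v = a ∨ c u v = b

/-- Gallai partition data -/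
structure GP (c : V → V → Fin r) where
  m : ℕ
  hm : 2 ≤ m
  P : V → Fin m
  hsurj : Function.Surjective P
  φ : Fin m → Fin m → Fin r
  a : Fin r
  b : Fin r
  hhom : ∀ u v, P u ≠ P v → c u v = φ (P u) (P v)
  hcol : ∀ i j, i ≠ j → φ i j = a ∨ φ i j = b

/-- graph of edges avoiding two colors -/
def Hgr (c : V → V → Fin r) (hc : Sym c) (a b : Fin r) : SimpleGraph V where
  Adj u v := u ≠ v ∧ c u v ≠ a ∧ c u v ≠ b
  symm := by
    constructor
    intro u v ⟨h1, h2, h3⟩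
    exact ⟨h1.symm, by rwa [hc v u], by rwa [hc v u]⟩
  loopless := by constructor; intro u ⟨h, _⟩; exact h rfl

end Defs

section Basic

variable {V : Type} [Fintype V] [DecidableEq V] {c : V → V → Fin r}

lemma res_sym (hc : Sym c) (p : V → Prop) : Sym (res c p) :=
  fun u v => hc u v

lemma res_nr (hnr : NR c) (p : V → Prop) : NR (res c p) := by
  intro u v w huv hvw huw
  exact hnr u v w (fun h => huv (Subtype.ext h)) (fun h => hvw (Subtype.ext h))
    (fun h => huw (Subtype.ext h))

/-- The key triangle dichotomy. -/
lemma dich (hc : Sym c) (hnr : NR c) {x u v w : V}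
    (hxu : x ≠ u) (hxv : x ≠ v) (hxw : x ≠ w) (huw : u ≠ w) (hvw : v ≠ w) (huv : u ≠ v)
    (hab : c x u ≠ c x v) (hg : c w u = c w v) :
    c x w = c w u ∨ (c x u = c w u ∧ c x w = c x v) ∨ (c x v = c w u ∧ c x w = c x u) := by
  have h1 := hnr x u w hxu huw hxw
  have h2 := hnr x v w hxv hvw hxw
  rw [hc u w] at h1
  rw [hc v w, ← hg] at h2
  rcases h1 with h1 | h1 | h1
  · rcases h2 with h2 | h2 | h2
    · exact absurd (h1.trans h2.symm) hab
    · exact Or.inl h2.symm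
    · exact Or.inr (Or.inl ⟨h1, h2.symm⟩)
  · exact Or.inl h1.symm
  · rcases h2 with h2 | h2 | h2
    · exact Or.inr (Or.inr ⟨h2, h1.symm⟩)
    · exact Or.inl h2.symm
    · exact absurd (h1.trans h2.symm) hab

end Basic

section Component

variable {V : Type} [Fintype V] [DecidableEq V] {c : V → V → Fin r}

lemma hgr_not_adj {hc : Sym c} {a b : Fin r} {u v : V} (h : ¬ (Hgr c hc a b).Adj u v)
    (hne : u ≠ v) : c u v = a ∨ c u v = b := by
  by_contra hcon
  push_neg at hcon
  exact h ⟨hne, hcon.1, hcon.2⟩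

/-- sets closed under adjacency block reachability -/
lemma reach_avoid {G : SimpleGraph V} {B : Set V}
    (hB : ∀ p q, G.Adj p q → q ∈ B → p ∈ B) {x : V} (hx : x ∉ B) :
    ∀ y, G.Reachable x y → y ∉ B := by
  intro y hy
  obtain ⟨w⟩ := hy
  induction w with
  | nil => exact hx
  | cons h w ih => exact ih (fun hq => hx (hB _ _ h hq))

/-- along a walk all of whose vertices avoid the non-neighborhood of `v`,
the colors from `v` are constant. -/
lemma walk_flip (hc : Sym c) (hnr : NR c) {a b : Fin r} {v : V}
    {p q : V} (w : (Hgr c hc a b).Walk p q)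
    (hv : ∀ y ∈ w.support, ¬ (Hgr c hc a b).Adj v y ∧ v ≠ y) :
    c v p = c v q := by
  induction w with
  | nil => rfl
  | @cons p z q h w ih =>
      have hvp := hv p (by simp)
      have hvz := hv z (by simp)
      have hstep : c v p = c v z := by
        rcases eq_or_ne p z with rfl | hpz
        · rfl
        have hcp := hgr_not_adj hvp.1 hvp.2
        have hcz := hgr_not_adj hvz.1 hvz.2
        obtain ⟨hpz', hpz1, hpz2⟩ := h
        have := hnr p v z (fun hh => hvp.2 hh.symm) hvz.2 hpz'
        rcases this with h1 | h1 | h1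
        · rw [hc p v] at h1; exact h1
        · exfalso
          rcases hcz with h2 | h2
          · exact hpz1 (h1.symm.trans h2)
          · exact hpz2 (h1.symm.trans h2)
        · exfalso; rw [hc p v] at h1
          rcases hcp with h2 | h2
          · exact hpz1 (h1.symm.trans h2)
          · exact hpz2 (h1.symm.trans h2)
      rw [hstep]
      exact ih (fun y hy => hv y (by simp [hy]))

/-- the connected component of a vertex with an incident H-edge, if not everything,
is a nontrivial module. -/
lemma comp_module (hc : Sym c) (hnr : NR c) (a b : Fin r) (x : V)
    (h2 : ∃ y, (Hgr c hc a b).Adj x y)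
    (hprop : ∃ z, ¬ (Hgr c hc a b).Reachable x z) :
    ∃ M : Finset V, 2 ≤ M.card ∧ M ≠ univ ∧ IsModule c M := by
  obtain ⟨y, hy⟩ := h2
  obtain ⟨z, hz⟩ := hprop
  set H := Hgr c hc a b with hH
  set M : Finset V := univ.filter (fun w => H.Reachable x w) with hM
  have hmem : ∀ w, w ∈ M ↔ H.Reachable x w := by intro w; simp [hM]
  refine ⟨M, ?_, ?_, ?_⟩
  · have hx : x ∈ M := (hmem x).2 (SimpleGraph.Reachable.refl x)
    have hyM : y ∈ M := (hmem y).2 hy.reachable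
    exact Finset.one_lt_card.2 ⟨x, hx, y, hyM, hy.ne⟩
  · intro h
    exact hz ((hmem z).1 (h ▸ mem_univ z))
  · intro v hv p hp q hq
    have hvr : ¬ H.Reachable x v := fun h => hv ((hmem v).2 h)
    have hp' := (hmem p).1 hp
    have hq' := (hmem q).1 hq
    obtain ⟨w⟩ := hp'.symm.trans hq'
    refine walk_flip hc hnr w ?_
    intro t ht
    have htr : H.Reachable x t := hp'.trans ⟨w.takeUntil t ht⟩
    constructor
    · intro ha
      exact hvr (htr.trans ha.symm.reachable)
    · intro he
      exact hvr (he ▸ htr)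

/-- the case where the coloring off `x` uses only two colors -/
lemma twoCol_step (hc : Sym c) (hnr : NR c) (x : V) (a b : Fin r)
    (h2 : TwoCol (res c (· ≠ x)) a b)
    (hnt : ¬ ∃ a' b', TwoCol c a' b') (hcard : 3 ≤ Fintype.card V) :
    ∃ M : Finset V, 2 ≤ M.card ∧ M ≠ univ ∧ IsModule c M := by
  have hoff : ∀ u v : V, u ≠ x → v ≠ x → u ≠ v → c u v = a ∨ c u v = b := by
    intro u v hu hv huv
    exact h2 ⟨u, hu⟩ ⟨v, hv⟩ (fun h => huv (congrArg Subtype.val h))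
  set E : Finset V := univ.filter (fun y => y ≠ x ∧ c x y ≠ a ∧ c x y ≠ b) with hE
  have hmemE : ∀ y, y ∈ E ↔ (y ≠ x ∧ c x y ≠ a ∧ c x y ≠ b) := by intro y; simp [hE]
  have hEne : E.Nonempty := by
    rcases E.eq_empty_or_nonempty with h | h
    · exfalso
      refine hnt ⟨a, b, ?_⟩
      intro u v huv
      rcases eq_or_ne u x with rfl | hux
      · have hvE : v ∉ E := by rw [h]; exact notMem_empty v
        rw [hmemE] at hvE
        by_contra hcon
        push_neg at hcon
        exact hvE ⟨Ne.symm huv, hcon.1, hcon.2⟩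
      · rcases eq_or_ne v x with hvx | hvx
        · have huE : u ∉ E := by rw [h]; exact notMem_empty u
          rw [hmemE] at huE
          rw [hvx, hc u x]
          by_contra hcon
          push_neg at hcon
          exact huE ⟨hux, hcon.1, hcon.2⟩
        · exact hoff u v hux hvx huv
    · exact h
  obtain ⟨y₀, hy₀⟩ := hEne
  rw [hmemE] at hy₀
  have hsame : ∀ y ∈ E, c x y = c x y₀ := by
    intro y hy
    rw [hmemE] at hy
    rcases eq_or_ne y y₀ with rfl | hne
    · rfl
    have := hnr y₀ x y hy₀.1 hy.1.symm hne.symm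
    rw [hc y₀ x] at this
    rcases this with h1 | h1 | h1
    · exact h1.symm
    · exfalso
      have : c y₀ y = a ∨ c y₀ y = b := hoff y₀ y hy₀.1 hy.1 hne.symm
      rcases this with h2 | h2 <;> rw [h2] at h1
      · exact hy.2.1 h1
      · exact hy.2.2 h1
    · exfalso
      have : c y₀ y = a ∨ c y₀ y = b := hoff y₀ y hy₀.1 hy.1 hne.symm
      rcases this with h2 | h2 <;> rw [h2] at h1
      · exact hy₀.2.1 h1
      · exact hy₀.2.2 h1
  by_cases hfull : ∀ y : V, y ≠ x → y ∈ E
  · refine ⟨univ.erase x, ?_, ?_, ?_⟩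
    · rw [Finset.card_erase_of_mem (mem_univ x), Finset.card_univ]
      omega
    · intro h
      have hxx : x ∈ univ.erase x := by rw [h]; exact mem_univ x
      exact (Finset.notMem_erase x univ) hxx
    · intro v hv p hp q hq
      have hvx : v = x := by
        by_contra hvx
        exact hv (Finset.mem_erase.2 ⟨hvx, mem_univ v⟩)
      subst hvx
      rw [hsame p (hfull p (Finset.mem_erase.1 hp).1),
        hsame q (hfull q (Finset.mem_erase.1 hq).1)]
  · push_neg at hfull
    obtain ⟨v₀, hv₀x, hv₀E⟩ := hfull
    refine ⟨insert x E, ?_, ?_, ?_⟩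
    · refine Finset.one_lt_card.2 ⟨x, mem_insert_self x E, y₀, ?_, (hy₀.1).symm⟩
      exact mem_insert_of_mem (by rw [hmemE]; exact hy₀)
    · intro h
      exact hv₀E (by
        have : v₀ ∈ insert x E := h ▸ mem_univ v₀
        rcases Finset.mem_insert.1 this with h' | h'
        · exact absurd h' hv₀x
        · exact h')
    · intro v hv p hp q hq
      have hvx : v ≠ x := fun h => hv (h ▸ mem_insert_self x E)
      have hvE : v ∉ E := fun h => hv (mem_insert_of_mem h)
      have hcvx : c x v = a ∨ c x v = b := by
        rw [hmemE] at hvE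
        push_neg at hvE
        by_contra hcon
        push_neg at hcon
        exact hcon.2 (hvE hvx hcon.1)
      have key : ∀ p' ∈ insert x E, c v p' = c v x := by
        intro p' hp'
        rcases Finset.mem_insert.1 hp' with rfl | hp'E
        · rfl
        rw [hmemE] at hp'E
        have hvp' : v ≠ p' := by
          rintro rfl
          exact hvE (by rw [hmemE]; exact hp'E)
        have := hnr v x p' hvx hp'E.1.symm hvp'
        rcases this with h1 | h1 | h1
        · exfalso
          have h2 := hsame p' (by rw [hmemE]; exact hp'E)
          rw [h2] at h1
          rw [hc v x] at h1
          rcases hcvx with h3 | h3 <;> rw [h3] at h1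
          · exact hy₀.2.1 h1.symm
          · exact hy₀.2.2 h1.symm
        · exfalso
          have h2 := hsame p' (by rw [hmemE]; exact hp'E)
          rw [h2] at h1
          have h4 : c v p' = a ∨ c v p' = b := hoff v p' hvx hp'E.1 hvp'
          rcases h4 with h3 | h3 <;> rw [h3] at h1
          · exact hy₀.2.1 h1
          · exact hy₀.2.2 h1
        · exact h1.symm
      rw [key p hp, key q hq]

/-- if all edges at `x` use two colors, we find a module avoiding `x` -/
lemma isolated_case (hc : Sym c) (hnr : NR c) (x : V) (a' b' : Fin r)
    (hxcol : ∀ y : V, y ≠ x → c x y = a' ∨ c x y = b')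
    (hnt : ¬ ∃ p q, TwoCol c p q) :
    ∃ M : Finset V, 2 ≤ M.card ∧ M ≠ univ ∧ IsModule c M := by
  have h1 : ¬ TwoCol c a' b' := fun h => hnt ⟨a', b', h⟩
  rw [TwoCol] at h1
  push_neg at h1
  obtain ⟨p, q, hpq, hca, hcb⟩ := h1
  have hqx : q ≠ x := by
    intro h
    rw [h, hc p x] at hca hcb
    rcases hxcol p (fun hh => hpq (hh.trans h.symm)) with h2 | h2
    · exact hca h2
    · exact hcb h2
  have hpx : p ≠ x := by
    intro h
    rw [h] at hca hcb
    rcases hxcol q hqx with h2 | h2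
    · exact hca h2
    · exact hcb h2
  refine comp_module hc hnr a' b' p ⟨q, hpq, hca, hcb⟩ ⟨x, ?_⟩
  intro hre
  have := reach_avoid (G := Hgr c hc a' b') (B := {v | v = x}) ?_ (by exact hpx) x hre
  · exact this rfl
  · intro w z hadj hz
    exfalso
    rw [Set.mem_setOf_eq] at hz
    obtain ⟨hwz, hwa, hwb⟩ := hadj
    rw [hz] at hwa hwb hwz
    rw [hc w x] at hwa hwb
    rcases hxcol w hwz with h | h
    · exact hwa h
    · exact hwb h

end Component

section ModuleOfGP

variable {V : Type} [Fintype V] [DecidableEq V] {c : V → V → Fin r} {x : V}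

@[simp] lemma res_apply {p : V → Prop} (u v : {v // p v}) : res c p u v = c u.1 v.1 := rfl

/-- the dichotomy, in terms of a Gallai partition of `V - x`. -/
lemma gp_dich (hc : Sym c) (hnr : NR c) (gp : GP (res c (fun v => v ≠ x)))
    {j : Fin gp.m} (u₁ u₂ w : {v : V // v ≠ x})
    (hj1 : gp.P u₁ = j) (hj2 : gp.P u₂ = j) (hw : gp.P w ≠ j)
    (hne : c x u₁.1 ≠ c x u₂.1) :
    c x w.1 = gp.φ (gp.P w) j ∨
      (c x u₁.1 = gp.φ (gp.P w) j ∧ c x w.1 = c x u₂.1) ∨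
      (c x u₂.1 = gp.φ (gp.P w) j ∧ c x w.1 = c x u₁.1) := by
  have hG1 : c w.1 u₁.1 = gp.φ (gp.P w) j := by
    have h := gp.hhom w u₁ (by rw [hj1]; exact hw)
    rw [res_apply] at h
    rw [h, hj1]
  have hG2 : c w.1 u₂.1 = gp.φ (gp.P w) j := by
    have h := gp.hhom w u₂ (by rw [hj2]; exact hw)
    rw [res_apply] at h
    rw [h, hj2]
  have hcoe : ∀ (t : {v : V // v ≠ x}), gp.P t = j → t.1 ≠ w.1 := by
    intro t ht hh
    exact hw (by rw [← Subtype.ext hh, ht])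
  have := dich hc hnr (Ne.symm u₁.2) (Ne.symm u₂.2) (Ne.symm w.2)
    (hcoe u₁ hj1) (hcoe u₂ hj2) (fun h => hne (by rw [h])) hne (hG1.trans hG2.symm)
  rwa [hG1] at this

/-- build the module `Q ∪ {x}` when `x` attaches to the rest in the expected colors -/
lemma buildQx (hc : Sym c) (hnr : NR c) (gp : GP (res c (fun v => v ≠ x)))
    {j : Fin gp.m} (u₁ : {v : V // v ≠ x}) (hj1 : gp.P u₁ = j)
    (hall : ∀ w : {v : V // v ≠ x}, gp.P w ≠ j → c x w.1 = c w.1 u₁.1) :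
    ∃ M : Finset V, 2 ≤ M.card ∧ M ≠ univ ∧ IsModule c M := by
  set M : Finset V := univ.filter (fun z => z = x ∨ ∃ h : z ≠ x, gp.P ⟨z, h⟩ = j) with hM
  have hmem : ∀ z, z ∈ M ↔ (z = x ∨ ∃ h : z ≠ x, gp.P ⟨z, h⟩ = j) := by
    intro z; simp [hM]
  have : Nontrivial (Fin gp.m) := by
    have := gp.hm
    exact Fin.nontrivial_iff_two_le.2 this
  obtain ⟨j', hj'⟩ := exists_ne j
  obtain ⟨w₀, hw₀⟩ := gp.hsurj j'
  have hw₀M : w₀.1 ∉ M := by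
    rw [hmem]
    push_neg
    refine ⟨w₀.2, fun h => ?_⟩
    have : (⟨w₀.1, h⟩ : {v : V // v ≠ x}) = w₀ := rfl
    rw [this, hw₀]
    exact hj'
  refine ⟨M, ?_, ?_, ?_⟩
  · refine Finset.one_lt_card.2 ⟨x, (hmem x).2 (Or.inl rfl), u₁.1,
      (hmem u₁.1).2 (Or.inr ⟨u₁.2, by simpa using hj1⟩), Ne.symm u₁.2⟩
  · intro h
    exact hw₀M (h ▸ mem_univ w₀.1)
  · intro v hv p hp q hq
    rw [hmem] at hv; push_neg at hv
    obtain ⟨hvx, hvj⟩ := hv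
    have key : ∀ p' ∈ M, c v p' = c v u₁.1 := by
      intro p' hp'
      rcases (hmem p').1 hp' with rfl | ⟨hp'x, hp'j⟩
      · rw [hc v p']
        have := hall ⟨v, hvx⟩ (hvj hvx)
        simpa using this
      · -- p' in part j, v outside part j: purity
        have h1 : c v p' = gp.φ (gp.P ⟨v, hvx⟩) (gp.P ⟨p', hp'x⟩) :=
          gp.hhom ⟨v, hvx⟩ ⟨p', hp'x⟩ (by rw [hp'j]; exact hvj hvx)
        have h2 : c v u₁.1 = gp.φ (gp.P ⟨v, hvx⟩) (gp.P u₁) :=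
          gp.hhom ⟨v, hvx⟩ u₁ (by rw [hj1]; exact hvj hvx)
        rw [h1, h2, hp'j, hj1]
    rw [key p hp, key q hq]

/-- the case where the two colors from `x` to `Q` are one partition color and one exotic color -/
lemma oneEx (hc : Sym c) (hnr : NR c) (gp : GP (res c (fun v => v ≠ x)))
    {j : Fin gp.m} (u₁ u₂ : {v : V // v ≠ x})
    (hj1 : gp.P u₁ = j) (hj2 : gp.P u₂ = j)
    (hin : c x u₁.1 = gp.a ∨ c x u₁.1 = gp.b)
    (hex1 : c x u₂.1 ≠ gp.a) (hex2 : c x u₂.1 ≠ gp.b)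
    (hne : c x u₁.1 ≠ c x u₂.1)
    (hCQ : ∀ t : {v : V // v ≠ x}, gp.P t = j → c x t.1 = c x u₁.1 ∨ c x t.1 = c x u₂.1)
    (hnt : ¬ ∃ p q, TwoCol c p q) :
    ∃ M : Finset V, 2 ≤ M.card ∧ M ≠ univ ∧ IsModule c M := by
  set α := c x u₁.1 with hα
  set e := c x u₂.1 with he
  set Bv : Set V := {z | ∃ h : z ≠ x, gp.P ⟨z, h⟩ ≠ j ∧ gp.φ (gp.P ⟨z, h⟩) j ≠ α} with hBv
  by_cases hB : Bv.Nonempty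
  · obtain ⟨z₀, hz₀⟩ := hB
    refine comp_module hc hnr gp.a gp.b x ⟨u₂.1, Ne.symm u₂.2, hex1, hex2⟩ ⟨z₀, ?_⟩
    intro hre
    have hBclosed : ∀ p q, (Hgr c hc gp.a gp.b).Adj p q → q ∈ Bv → p ∈ Bv := by
      intro p q hadj hq
      obtain ⟨hqx, hqj, hqφ⟩ := hq
      obtain ⟨hpq, hpa, hpb⟩ := hadj
      rcases eq_or_ne p x with rfl | hpx
      · exfalso
        have hd := gp_dich hc hnr gp u₁ u₂ ⟨q, hqx⟩ hj1 hj2 hqj hne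
        rcases hd with h | ⟨h, _⟩ | ⟨h, _⟩
        · rcases gp.hcol (gp.P ⟨q, hqx⟩) j hqj with h2 | h2 <;> rw [h2] at h
          · exact hpa h
          · exact hpb h
        · exact hqφ h.symm
        · rcases gp.hcol (gp.P ⟨q, hqx⟩) j hqj with h2 | h2 <;> rw [h2] at h
          · exact hex1 h
          · exact hex2 h
      · have hqx' := hqx
        rcases eq_or_ne (gp.P ⟨p, hpx⟩) (gp.P ⟨q, hqx⟩) with hPeq | hPne
        · exact ⟨hpx, by rw [hPeq]; exact hqj, by rw [hPeq]; exact hqφ⟩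
        · exfalso
          have h := gp.hhom ⟨p, hpx⟩ ⟨q, hqx⟩ hPne
          rw [res_apply] at h
          rcases gp.hcol (gp.P ⟨p, hpx⟩) (gp.P ⟨q, hqx⟩) hPne with h2 | h2 <;>
            rw [h2] at h
          · exact hpa h
          · exact hpb h
    have hxB : x ∉ Bv := by
      rintro ⟨h, -⟩
      exact h rfl
    exact reach_avoid hBclosed hxB z₀ hre hz₀
  · -- Bv empty: φ (P w) j = α for all outside parts, so x sees only α and e
    have hφ : ∀ w : {v : V // v ≠ x}, gp.P w ≠ j → gp.φ (gp.P w) j = α := by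
      intro w hw
      by_contra hcon
      exact hB ⟨w.1, w.2, by simpa using hw, by simpa using hcon⟩
    have hxcol : ∀ y : V, y ≠ x → c x y = α ∨ c x y = e := by
      intro y hy
      rcases eq_or_ne (gp.P ⟨y, hy⟩) j with hPy | hPy
      · exact hCQ ⟨y, hy⟩ hPy
      · have hd := gp_dich hc hnr gp u₁ u₂ ⟨y, hy⟩ hj1 hj2 hPy hne
        rw [hφ ⟨y, hy⟩ hPy] at hd
        rcases hd with h | ⟨_, h⟩ | ⟨_, h⟩
        · exact Or.inl h
        · exact Or.inr h
        · exact Or.inl h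
    exact isolated_case hc hnr x α e hxcol hnt

/-- Existence of a nontrivial module from a Gallai partition of `V - x`. -/
lemma module_of_gp (hc : Sym c) (hnr : NR c)
    (gp : GP (res c (fun v => v ≠ x)))
    (hntc' : ¬ ∃ a' b', TwoCol (res c (fun v => v ≠ x)) a' b')
    (hnt : ¬ ∃ a' b', TwoCol c a' b') :
    ∃ M : Finset V, 2 ≤ M.card ∧ M ≠ univ ∧ IsModule c M := by
  -- some part is non-singleton
  have hninj : ¬ Function.Injective gp.P := by
    intro hinj
    refine hntc' ⟨gp.a, gp.b, ?_⟩
    intro u v huv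
    have hP : gp.P u ≠ gp.P v := fun h => huv (hinj h)
    rw [gp.hhom u v hP]
    exact gp.hcol _ _ hP
  rw [Function.not_injective_iff] at hninj
  obtain ⟨u, v, hPuv, huv⟩ := hninj
  set j := gp.P u with hj
  by_cases hpure : ∀ q q' : {v : V // v ≠ x}, gp.P q = j → gp.P q' = j →
      c x q.1 = c x q'.1
  · -- x is pure on the non-singleton part: that part is a module
    set M : Finset V := univ.filter (fun z => ∃ h : z ≠ x, gp.P ⟨z, h⟩ = j) with hM
    have hmem : ∀ z, z ∈ M ↔ ∃ h : z ≠ x, gp.P ⟨z, h⟩ = j := by intro z; simp [hM]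
    refine ⟨M, ?_, ?_, ?_⟩
    · refine Finset.one_lt_card.2 ⟨u.1, (hmem u.1).2 ⟨u.2, hj.symm⟩, v.1,
        (hmem v.1).2 ⟨v.2, hPuv.symm⟩, fun h => huv (Subtype.ext h)⟩
    · intro h
      have : x ∈ M := h ▸ mem_univ x
      rw [hmem] at this
      obtain ⟨h', -⟩ := this
      exact h' rfl
    · intro w hw p hp q hq
      rw [hmem] at hp hq
      obtain ⟨hpx, hpj⟩ := hp
      obtain ⟨hqx, hqj⟩ := hq
      rcases eq_or_ne w x with rfl | hwx
      · exact hpure ⟨p, hpx⟩ ⟨q, hqx⟩ hpj hqj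
      · have hwj : gp.P ⟨w, hwx⟩ ≠ j := by
          intro hcon
          exact hw ((hmem w).2 ⟨hwx, hcon⟩)
        have h1 : c w p = gp.φ (gp.P ⟨w, hwx⟩) (gp.P ⟨p, hpx⟩) :=
          gp.hhom ⟨w, hwx⟩ ⟨p, hpx⟩ (by rw [hpj]; exact hwj)
        have h2 : c w q = gp.φ (gp.P ⟨w, hwx⟩) (gp.P ⟨q, hqx⟩) :=
          gp.hhom ⟨w, hwx⟩ ⟨q, hqx⟩ (by rw [hqj]; exact hwj)
        rw [h1, h2, hpj, hqj]
  · -- x is impure on the part of u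
    push_neg at hpure
    obtain ⟨u₁, u₂, hj1, hj2, hne⟩ := hpure
    by_cases hthird : ∃ t : {v : V // v ≠ x}, gp.P t = j ∧
        c x t.1 ≠ c x u₁.1 ∧ c x t.1 ≠ c x u₂.1
    · -- three colors from x to the part: x extends the module
      obtain ⟨t, htj, ht1, ht2⟩ := hthird
      refine buildQx hc hnr gp u₁ hj1 ?_
      intro w hw
      have hG1 : c w.1 u₁.1 = gp.φ (gp.P w) j := by
        have h : c w.1 u₁.1 = gp.φ (gp.P w) (gp.P u₁) :=
          gp.hhom w u₁ (by rw [hj1]; exact hw)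
        rw [h, hj1]
      rw [hG1]
      have d12 := gp_dich hc hnr gp u₁ u₂ w hj1 hj2 hw hne
      have d13 := gp_dich hc hnr gp u₁ t w hj1 htj hw (Ne.symm ht1)
      have d23 := gp_dich hc hnr gp u₂ t w hj2 htj hw (Ne.symm ht2)
      rcases d12 with h | ⟨ha1, hb1⟩ | ⟨ha1, hb1⟩
      · exact h
      · -- c x u₁ = φ, c x w = c x u₂
        rcases d23 with h | ⟨ha2, hb2⟩ | ⟨ha2, hb2⟩
        · exact h
        · exact absurd (hb1.symm.trans hb2) (Ne.symm ht2)
        · exact absurd (ha2.trans ha1.symm) ht1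
      · -- c x u₂ = φ, c x w = c x u₁
        rcases d13 with h | ⟨ha2, hb2⟩ | ⟨ha2, hb2⟩
        · exact h
        · exact absurd (hb1.symm.trans hb2) (Ne.symm ht1)
        · exact absurd (ha2.trans ha1.symm) ht2
    · -- exactly two colors from x to the part
      push_neg at hthird
      have hCQ : ∀ t : {v : V // v ≠ x}, gp.P t = j →
          c x t.1 = c x u₁.1 ∨ c x t.1 = c x u₂.1 := by
        intro t ht
        exact or_iff_not_imp_left.2 (hthird t ht)
      by_cases h1ab : c x u₁.1 = gp.a ∨ c x u₁.1 = gp.b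
      · by_cases h2ab : c x u₂.1 = gp.a ∨ c x u₂.1 = gp.b
        · -- both partition colors: all x-edges are 2-colored
          refine isolated_case hc hnr x gp.a gp.b ?_ hnt
          intro y hy
          rcases eq_or_ne (gp.P ⟨y, hy⟩) j with hPy | hPy
          · rcases hCQ ⟨y, hy⟩ hPy with h | h
            · rw [h]; exact h1ab
            · rw [h]; exact h2ab
          · have hd := gp_dich hc hnr gp u₁ u₂ ⟨y, hy⟩ hj1 hj2 hPy hne
            rcases hd with h | ⟨-, h⟩ | ⟨-, h⟩
            · rw [h]; exact gp.hcol _ _ hPy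
            · rw [h]; exact h2ab
            · rw [h]; exact h1ab
        · push_neg at h2ab
          exact oneEx hc hnr gp u₁ u₂ hj1 hj2 h1ab h2ab.1 h2ab.2 hne hCQ hnt
      · push_neg at h1ab
        by_cases h2ab : c x u₂.1 = gp.a ∨ c x u₂.1 = gp.b
        · refine oneEx hc hnr gp u₂ u₁ hj2 hj1 h2ab h1ab.1 h1ab.2 (Ne.symm hne)
            (fun t ht => (hCQ t ht).symm) hnt
        · -- both exotic: x attaches with partition colors everywhere
          push_neg at h2ab
          refine buildQx hc hnr gp u₁ hj1 ?_
          intro w hw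
          have hG1 : c w.1 u₁.1 = gp.φ (gp.P w) j := by
            have h : c w.1 u₁.1 = gp.φ (gp.P w) (gp.P u₁) :=
              gp.hhom w u₁ (by rw [hj1]; exact hw)
            rw [h, hj1]
          rw [hG1]
          have hd := gp_dich hc hnr gp u₁ u₂ w hj1 hj2 hw hne
          rcases hd with h | ⟨h, -⟩ | ⟨h, -⟩
          · exact h
          · exfalso
            rcases gp.hcol (gp.P w) j hw with h2 | h2 <;> rw [h2] at h
            · exact h1ab.1 h
            · exact h1ab.2 h
          · exfalso
            rcases gp.hcol (gp.P w) j hw with h2 | h2 <;> rw [h2] at h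
            · exact h2ab.1 h
            · exact h2ab.2 h

end ModuleOfGP

section Partition

variable {V : Type} [Fintype V] [DecidableEq V] {c : V → V → Fin r}

/-- lift a Gallai partition of the quotient by a module -/
lemma quotient_pullback (hc : Sym c) (M : Finset V) (hMmod : IsModule c M)
    (m₀ : V) (hm₀ : m₀ ∈ M)
    (gpq : GP (res c (fun v => v ∉ M ∨ v = m₀))) : Nonempty (GP c) := by
  set p : V → Prop := fun v => v ∉ M ∨ v = m₀ with hp
  have hq0 : p m₀ := Or.inr rfl
  set q0 : {v // p v} := ⟨m₀, hq0⟩ with hq0'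
  set P : V → Fin gpq.m := fun v =>
    if h : p v then gpq.P ⟨v, h⟩ else gpq.P q0 with hP
  have hPtrue : ∀ (v : V) (h : p v), P v = gpq.P ⟨v, h⟩ := by
    intro v h
    simp only [hP, dif_pos h]
  have hPfalse : ∀ (v : V), ¬ p v → P v = gpq.P q0 := by
    intro v h
    simp only [hP, dif_neg h]
  refine ⟨⟨gpq.m, gpq.hm, P, ?_, gpq.φ, gpq.a, gpq.b, ?_, gpq.hcol⟩⟩
  · intro i
    obtain ⟨w, hw⟩ := gpq.hsurj i
    exact ⟨w.1, by rw [hPtrue w.1 w.2]; exact hw⟩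
  · intro u v huv
    by_cases hu : p u <;> by_cases hv : p v
    · rw [hPtrue u hu, hPtrue v hv] at huv ⊢
      exact gpq.hhom ⟨u, hu⟩ ⟨v, hv⟩ huv
    · -- v ∈ M, v ≠ m₀ ; u ∉ M (else parts equal)
      rw [hPtrue u hu] at huv ⊢
      rw [hPfalse v hv] at huv ⊢
      have hvM : v ∈ M := by
        by_contra h
        exact hv (Or.inl h)
      have huM : u ∉ M := by
        intro h
        rcases hu with h' | h'
        · exact h' h
        · exact huv (congrArg gpq.P (Subtype.ext h'))
      have h1 : c u v = c u m₀ := hMmod u huM v hvM m₀ hm₀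
      have h2 : c u m₀ = gpq.φ (gpq.P ⟨u, hu⟩) (gpq.P q0) :=
        gpq.hhom ⟨u, hu⟩ q0 huv
      rw [h1, h2]
    · rw [hPfalse u hu] at huv ⊢
      rw [hPtrue v hv] at huv ⊢
      have huM : u ∈ M := by
        by_contra h
        exact hu (Or.inl h)
      have hvM : v ∉ M := by
        intro h
        rcases hv with h' | h'
        · exact h' h
        · exact huv (congrArg gpq.P (Subtype.ext h')).symm
      have h1 : c u v = c v u := hc u v
      have h2 : c v u = c v m₀ := hMmod v hvM u huM m₀ hm₀
      have h3 : c v m₀ = c m₀ v := hc v m₀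
      have h4 : c m₀ v = gpq.φ (gpq.P q0) (gpq.P ⟨v, hv⟩) :=
        gpq.hhom q0 ⟨v, hv⟩ huv
      rw [h1, h2, h3, h4]
    · exfalso
      rw [hPfalse u hu, hPfalse v hv] at huv
      exact huv rfl

/-- Gallai's partition theorem. -/
lemma gallai_partition : ∀ (k : ℕ) (V : Type) [Fintype V] [DecidableEq V]
    (c : V → V → Fin r), Fintype.card V = k → 2 ≤ Fintype.card V →
    Sym c → NR c → Nonempty (GP c) := by
  intro k
  induction k using Nat.strong_induction_on with
  | _ k IH =>
  intro V _ _ c hcard h2 hc hnr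
  by_cases h2col : ∃ a b, TwoCol c a b
  · obtain ⟨a, b, hab⟩ := h2col
    set e := Fintype.equivFin V with he
    refine ⟨⟨Fintype.card V, h2, e, e.surjective,
      fun i j => c (e.symm i) (e.symm j), a, b, ?_, ?_⟩⟩
    · intro u v _
      simp
    · intro i j hij
      exact hab _ _ (fun h => hij (by rw [← Equiv.apply_symm_apply e i,
        ← Equiv.apply_symm_apply e j, h]))
  · -- at least 3 colors: find a module and recurse
    have hcard3 : 3 ≤ Fintype.card V := by
      by_contra hlt
      push_neg at hlt
      obtain ⟨u, v, huv⟩ := Fintype.exists_pair_of_one_lt_card (α := V) (by omega)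
      refine h2col ⟨c u v, c u v, ?_⟩
      intro a b hab
      have hV : ∀ w : V, w = u ∨ w = v := by
        intro w
        by_contra hcon
        push_neg at hcon
        have hsub : ({w, u, v} : Finset V).card ≤ Fintype.card V := by
          rw [← Finset.card_univ]
          exact Finset.card_le_card (Finset.subset_univ _)
        have : ({w, u, v} : Finset V).card = 3 := by
          rw [Finset.card_insert_of_notMem (by simp [hcon.1, hcon.2]),
            Finset.card_insert_of_notMem (by simp [huv]), Finset.card_singleton]
        omega
      rcases hV a with rfl | rfl <;> rcases hV b with rfl | rfl
      · exact absurd rfl hab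
      · exact Or.inl rfl
      · exact Or.inl (hc a b)
      · exact absurd rfl hab
    have hne : Nonempty V := Fintype.card_pos_iff.1 (by omega)
    obtain ⟨x⟩ := hne
    have hcx : Fintype.card {v : V // v ≠ x} = Fintype.card V - 1 := by
      rw [Fintype.card_subtype]
      rw [show (univ.filter (fun v : V => v ≠ x)) = univ.erase x by
        ext z; simp [Finset.mem_erase]]
      rw [Finset.card_erase_of_mem (mem_univ x), Finset.card_univ]
    have hmod : ∃ M : Finset V, 2 ≤ M.card ∧ M ≠ univ ∧ IsModule c M := by
      by_cases htc' : ∃ a b, TwoCol (res c (fun v => v ≠ x)) a b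
      · obtain ⟨a, b, hab⟩ := htc'
        exact twoCol_step hc hnr x a b hab h2col hcard3
      · have hgp' : Nonempty (GP (res c (fun v => v ≠ x))) := by
          refine IH (k - 1) (by omega) _ _ ?_ ?_ (res_sym hc _) (res_nr hnr _)
          · rw [hcx]; omega
          · rw [hcx]; omega
        exact module_of_gp hc hnr hgp'.some htc' h2col
    obtain ⟨M, hM2, hMu, hMmod⟩ := hmod
    obtain ⟨m₀, hm₀⟩ := (Finset.card_pos (s := M)).1 (by omega)
    have hMle : M.card ≤ Fintype.card V := by
      rw [← Finset.card_univ]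
      exact Finset.card_le_card (Finset.subset_univ M)
    have hMlt : M.card < Fintype.card V := by
      refine lt_of_le_of_ne hMle ?_
      intro h
      exact hMu (Finset.eq_univ_of_card M h)
    have hcardq : Fintype.card {v : V // v ∉ M ∨ v = m₀} =
        Fintype.card V - M.card + 1 := by
      rw [Fintype.card_subtype]
      rw [show (univ.filter (fun v : V => v ∉ M ∨ v = m₀)) = (univ \ M) ∪ {m₀} by
        ext z; by_cases hz : z ∈ M <;> simp [hz]]
      rw [Finset.card_union_of_disjoint (by
        simp [Finset.disjoint_singleton_right, hm₀])]
      rw [Finset.card_sdiff_of_subset (Finset.subset_univ M), Finset.card_univ,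
        Finset.card_singleton]
    have hgpq : Nonempty (GP (res c (fun v => v ∉ M ∨ v = m₀))) := by
      refine IH (Fintype.card V - M.card + 1) (by omega) _ _ hcardq ?_
        (res_sym hc _) (res_nr hnr _)
      rw [hcardq]; omega
    exact quotient_pullback hc M hMmod m₀ hm₀ hgpq.some

end Partition

section Chrom

variable {V : Type} [Fintype V] [DecidableEq V]

/-- the graph of colors in `S` -/
def Gg (c : V → V → Fin r) (S : Finset (Fin r)) : SimpleGraph V :=
  SimpleGraph.fromRel (fun u v => c u v ∈ S)

/-- chromatic number as a natural number -/
noncomputable def chi (G : SimpleGraph V) : ℕ := sInf {k | G.Colorable k}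

lemma chi_colorable (G : SimpleGraph V) : G.Colorable (chi G) := by
  have h : {k | G.Colorable k}.Nonempty := ⟨Fintype.card V, G.colorable_of_fintype⟩
  exact Nat.sInf_mem h

lemma chi_le {G : SimpleGraph V} {k : ℕ} (h : G.Colorable k) : chi G ≤ k :=
  Nat.sInf_le h

lemma chi_pos [Nonempty V] (G : SimpleGraph V) : 1 ≤ chi G := by
  by_contra h
  push_neg at h
  interval_cases hh : chi G
  · obtain ⟨f⟩ := chi_colorable G
    rw [hh] at f
    exact (f (Classical.arbitrary V)).elim0

lemma chi_cast_le (G : SimpleGraph V) : (chi G : ℕ∞) ≤ G.chromaticNumber := by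
  rw [SimpleGraph.chromaticNumber]
  refine le_iInf₂ ?_
  intro k hk
  exact_mod_cast chi_le hk

lemma gg_adj_lift {c : V → V → Fin r} {S : Finset (Fin r)} {p : V → Prop}
    {u v : {v // p v}} (h : (Gg (res c p) S).Adj u v) : (Gg c S).Adj u.1 v.1 := by
  obtain ⟨hne, h⟩ := h
  exact ⟨fun hh => hne (Subtype.ext hh), h⟩

/-- restriction to a part, counted with image colors -/
lemma chi_part_le_image {c : V → V → Fin r} {S : Finset (Fin r)} (p : V → Prop)
    [Fintype {v // p v}] {n : ℕ} (f : (Gg c S).Coloring (Fin n)) :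
    chi (Gg (res c p) S) ≤ ((univ : Finset {v // p v}).image (fun v => f v.1)).card := by
  have hco : (Gg (res c p) S).Colorable
      (Fintype.card ((univ : Finset {v // p v}).image (fun v => f v.1))) := by
    refine SimpleGraph.Coloring.colorable (SimpleGraph.Coloring.mk
      (fun v => (⟨f v.1, Finset.mem_image_of_mem _ (mem_univ v)⟩ :
        ((univ : Finset {v // p v}).image (fun v => f v.1)))) ?_)
    intro u v huv hequ
    exact f.valid (gg_adj_lift huv) (by simpa using hequ)
  have := chi_le hco
  rwa [Fintype.card_coe] at this

lemma chi_res_le {c : V → V → Fin r} {S : Finset (Fin r)} (p : V → Prop)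
    [Fintype {v // p v}] :
    chi (Gg (res c p) S) ≤ chi (Gg c S) := by
  obtain ⟨f⟩ := chi_colorable (Gg c S)
  calc chi (Gg (res c p) S) ≤ _ := chi_part_le_image p f
  _ ≤ chi (Gg c S) := by
    calc ((univ : Finset {v // p v}).image (fun v => f v.1)).card ≤
        (univ : Finset (Fin (chi (Gg c S)))).card := Finset.card_le_card (subset_univ _)
    _ = chi (Gg c S) := by simp

variable {c : V → V → Fin r}

/-- join bound : if both partition colors are in S, parts stack up -/
lemma sum_chi_le (gp : GP c) (S : Finset (Fin r))
    (haS : gp.a ∈ S) (hbS : gp.b ∈ S) :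
    ∑ i, chi (Gg (res c (fun v => gp.P v = i)) S) ≤ chi (Gg c S) := by
  obtain ⟨f⟩ := chi_colorable (Gg c S)
  set A : Fin gp.m → Finset (Fin (chi (Gg c S))) :=
    fun i => (univ : Finset {v // gp.P v = i}).image (fun v => f v.1) with hA
  have hle : ∀ i, chi (Gg (res c (fun v => gp.P v = i)) S) ≤ (A i).card := by
    intro i
    exact chi_part_le_image _ f
  have hdisj : ∀ i ∈ (univ : Finset (Fin gp.m)), ∀ j ∈ univ, i ≠ j →
      Disjoint (A i) (A j) := by
    intro i _ j _ hij
    rw [Finset.disjoint_left]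
    intro k hki hkj
    simp only [hA, Finset.mem_image, Finset.mem_univ, true_and] at hki hkj
    obtain ⟨u, hu⟩ := hki
    obtain ⟨v, hv⟩ := hkj
    have hPuv : gp.P u.1 ≠ gp.P v.1 := by rw [u.2, v.2]; exact hij
    have hadj : (Gg c S).Adj u.1 v.1 := by
      refine ⟨fun h => hPuv (by rw [h]), Or.inl ?_⟩
      show c u.1 v.1 ∈ S
      rw [gp.hhom u.1 v.1 hPuv]
      rcases gp.hcol _ _ hPuv with h | h <;> rw [h]
      · exact haS
      · exact hbS
    exact f.valid hadj (hu.trans hv.symm)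
  calc ∑ i, chi (Gg (res c (fun v => gp.P v = i)) S)
      ≤ ∑ i, (A i).card := Finset.sum_le_sum (fun i _ => hle i)
    _ = (univ.biUnion A).card := (Finset.card_biUnion hdisj).symm
    _ ≤ (univ : Finset (Fin (chi (Gg c S)))).card := Finset.card_le_card (subset_univ _)
    _ = chi (Gg c S) := by simp

/-- pair bound for the two mixed color classes -/
lemma pair_chi_le (gp : GP c) (S S' : Finset (Fin r))
    (haS : gp.a ∈ S) (hbS' : gp.b ∈ S') :
    ∑ i, chi (Gg (res c (fun v => gp.P v = i)) S) *
        chi (Gg (res c (fun v => gp.P v = i)) S') ≤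
      chi (Gg c S) * chi (Gg c S') := by
  obtain ⟨f⟩ := chi_colorable (Gg c S)
  obtain ⟨g⟩ := chi_colorable (Gg c S')
  set T : Fin gp.m → Finset (Fin (chi (Gg c S)) × Fin (chi (Gg c S'))) :=
    fun i => ((univ : Finset {v // gp.P v = i}).image (fun v => f v.1)) ×ˢ
      ((univ : Finset {v // gp.P v = i}).image (fun v => g v.1)) with hT
  have hle : ∀ i, chi (Gg (res c (fun v => gp.P v = i)) S) *
      chi (Gg (res c (fun v => gp.P v = i)) S') ≤ (T i).card := by
    intro i
    rw [hT]
    rw [Finset.card_product]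
    exact Nat.mul_le_mul (chi_part_le_image _ f) (chi_part_le_image _ g)
  have hdisj : ∀ i ∈ (univ : Finset (Fin gp.m)), ∀ j ∈ univ, i ≠ j →
      Disjoint (T i) (T j) := by
    intro i _ j _ hij
    rw [Finset.disjoint_left]
    intro kl hki hkj
    rw [hT] at hki hkj
    simp only [Finset.mem_product] at hki hkj
    obtain ⟨hk1, hk2⟩ := hki
    obtain ⟨hk1', hk2'⟩ := hkj
    simp only [Finset.mem_image, Finset.mem_univ, true_and] at hk1 hk2 hk1' hk2'
    obtain ⟨u, hu⟩ := hk1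
    obtain ⟨v, hv⟩ := hk1'
    obtain ⟨u', hu'⟩ := hk2
    obtain ⟨v', hv'⟩ := hk2'
    have hPuv : gp.P u.1 ≠ gp.P v.1 := by rw [u.2, v.2]; exact hij
    have hPuv' : gp.P u'.1 ≠ gp.P v'.1 := by rw [u'.2, v'.2]; exact hij
    have hfS : gp.φ i j ∉ S := by
      intro hmem
      have hadj : (Gg c S).Adj u.1 v.1 := by
        refine ⟨fun h => hPuv (by rw [h]), Or.inl ?_⟩
        show c u.1 v.1 ∈ S
        rw [gp.hhom u.1 v.1 hPuv, u.2, v.2]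
        exact hmem
      exact f.valid hadj (hu.trans hv.symm)
    have hgS : gp.φ i j ∉ S' := by
      intro hmem
      have hadj : (Gg c S').Adj u'.1 v'.1 := by
        refine ⟨fun h => hPuv' (by rw [h]), Or.inl ?_⟩
        show c u'.1 v'.1 ∈ S'
        rw [gp.hhom u'.1 v'.1 hPuv', u'.2, v'.2]
        exact hmem
      exact g.valid hadj (hu'.trans hv'.symm)
    rcases gp.hcol i j hij with h | h <;> rw [h] at hfS hgS
    · exact hfS haS
    · exact hgS hbS'
  calc ∑ i, chi (Gg (res c (fun v => gp.P v = i)) S) *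
        chi (Gg (res c (fun v => gp.P v = i)) S')
      ≤ ∑ i, (T i).card := Finset.sum_le_sum (fun i _ => hle i)
    _ = (univ.biUnion T).card := (Finset.card_biUnion hdisj).symm
    _ ≤ (univ : Finset (Fin (chi (Gg c S)) × Fin (chi (Gg c S')))).card :=
        Finset.card_le_card (subset_univ _)
    _ = chi (Gg c S) * chi (Gg c S') := by simp

end Chrom

section NUM

/-- the numeric combination lemma -/
lemma NUM {ι : Type} [Fintype ι] [Nonempty ι] {κ : Type} [DecidableEq κ]
    (t : ℕ) (nn : ι → ℕ) (hnn : ∀ i, 1 ≤ nn i)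
    (A X D : Finset κ)
    (u : κ → ι → ℕ) (v w : κ → ι → ℕ) (z : κ → ι → ℕ)
    (χA : κ → ℕ) (χX χY : κ → ℕ) (χD : κ → ℕ)
    (h1 : ∀ S ∈ A, ∑ i, u S i ≤ χA S)
    (h2 : ∀ S ∈ X, ∑ i, v S i * w S i ≤ χX S * χY S)
    (h3 : ∀ S ∈ D, ∀ i, z S i ≤ χD S)
    (hu1 : ∀ S ∈ A, ∀ i, 1 ≤ u S i)
    (hv1 : ∀ S ∈ X, ∀ i, 1 ≤ v S i * w S i)
    (hz1 : ∀ S ∈ D, ∀ i, 1 ≤ z S i)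
    (hK : t ≤ A.card + X.card)
    (hIH : ∀ i, nn i ^ t ≤ (∏ S ∈ A, u S i) * (∏ S ∈ X, v S i * w S i) * ∏ S ∈ D, z S i) :
    (∑ i, nn i) ^ t ≤ (∏ S ∈ A, χA S) * (∏ S ∈ X, χX S * χY S) * ∏ S ∈ D, χD S := by
  set K := A.card + X.card with hKdef
  set N : ℝ := ∑ i, (nn i : ℝ) with hN
  have hnn0 : ∀ i, (0 : ℝ) < nn i := by
    intro i
    exact_mod_cast hnn i
  have hN0 : (0 : ℝ) < N := by
    rw [hN]
    exact Finset.sum_pos (fun i _ => hnn0 i) univ_nonempty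
  set θ : ι → ℝ := fun i => (nn i : ℝ) / N with hθ
  have hθ0 : ∀ i, 0 < θ i := fun i => div_pos (hnn0 i) hN0
  have hθ0' : ∀ i ∈ (univ : Finset ι), (0:ℝ) ≤ θ i := fun i _ => (hθ0 i).le
  have hθsum : ∑ i, θ i = 1 := by
    rw [hθ, ← Finset.sum_div]
    rw [← hN]
    exact div_self (ne_of_gt hN0)
  -- helper: AM-GM for a sum-type factor
  have helperSum : ∀ (y : ι → ℕ), (∀ i, 1 ≤ y i) →
      N * ∏ i, ((y i : ℝ) / (nn i : ℝ)) ^ (θ i) ≤ ∑ i, (y i : ℝ) := by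
    intro y hy
    have hy0 : ∀ i, (0:ℝ) < y i := by intro i; exact_mod_cast hy i
    have hgm := Real.geom_mean_le_arith_mean_weighted univ θ
      (fun i => (y i : ℝ) * N / (nn i : ℝ)) hθ0' hθsum
      (fun i _ => by positivity)
    have e1 : ∏ i, ((y i : ℝ) * N / (nn i : ℝ)) ^ (θ i) =
        N * ∏ i, ((y i : ℝ) / (nn i : ℝ)) ^ (θ i) := by
      have : ∀ i ∈ (univ : Finset ι), ((y i : ℝ) * N / (nn i : ℝ)) ^ (θ i) =
          N ^ (θ i) * ((y i : ℝ) / (nn i : ℝ)) ^ (θ i) := by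
        intro i _
        rw [← Real.mul_rpow hN0.le (by positivity)]
        ring_nf
      rw [Finset.prod_congr rfl this, Finset.prod_mul_distrib]
      rw [← Real.rpow_sum_of_pos hN0 θ univ, hθsum, Real.rpow_one]
    have e2 : ∑ i, θ i * ((y i : ℝ) * N / (nn i : ℝ)) = ∑ i, (y i : ℝ) := by
      refine Finset.sum_congr rfl ?_
      intro i _
      rw [hθ]
      have hne1 : (nn i : ℝ) ≠ 0 := ne_of_gt (hnn0 i)
      have hne2 : N ≠ 0 := ne_of_gt hN0
      field_simp
    rw [e1, e2] at hgm
    exact hgm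
  -- helper: for max-type factors
  have helperMax : ∀ (y : ι → ℕ) (χ : ℕ), 1 ≤ χ → (∀ i, y i ≤ χ) →
      ∏ i, (y i : ℝ) ^ (θ i) ≤ (χ : ℝ) := by
    intro y χ hχ hyχ
    calc ∏ i, (y i : ℝ) ^ (θ i) ≤ ∏ i, (χ : ℝ) ^ (θ i) := by
          refine Finset.prod_le_prod (fun i _ => by positivity) ?_
          intro i _
          exact Real.rpow_le_rpow (by positivity) (by exact_mod_cast hyχ i) (hθ0 i).le
      _ = (χ : ℝ) := by
          rw [← Real.rpow_sum_of_pos (by exact_mod_cast hχ) θ univ, hθsum,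
            Real.rpow_one]
  -- now the main chain, in ℝ
  rw [← Nat.cast_le (α := ℝ)]
  push_cast
  have hMainA : ∀ S ∈ A, N * ∏ i, ((u S i : ℝ) / (nn i : ℝ)) ^ (θ i) ≤ (χA S : ℝ) := by
    intro S hS
    refine (helperSum (u S) (hu1 S hS)).trans ?_
    exact_mod_cast h1 S hS
  have hMainX : ∀ S ∈ X, N * ∏ i, (((v S i : ℝ) * (w S i : ℝ)) / (nn i : ℝ)) ^ (θ i) ≤
      (χX S : ℝ) * (χY S : ℝ) := by
    intro S hS
    have := helperSum (fun i => v S i * w S i) (hv1 S hS)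
    push_cast at this
    refine this.trans ?_
    exact_mod_cast h2 S hS
  have hMainD : ∀ S ∈ D, ∏ i, (z S i : ℝ) ^ (θ i) ≤ (χD S : ℝ) := by
    intro S hS
    refine helperMax (z S) (χD S) ?_ (h3 S hS)
    exact le_trans (hz1 S hS (Classical.arbitrary ι)) (h3 S hS _)
  -- the lower bound for each i
  have hGi : ∀ i, (1:ℝ) / N ^ (K - t) ≤
      ((∏ S ∈ A, (u S i : ℝ) / (nn i : ℝ)) *
        ∏ S ∈ X, ((v S i : ℝ) * (w S i : ℝ)) / (nn i : ℝ)) * ∏ S ∈ D, (z S i : ℝ) := by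
    intro i
    have hnum : ((nn i : ℝ)) ^ t ≤
        ((∏ S ∈ A, (u S i : ℝ)) * ∏ S ∈ X, (v S i : ℝ) * (w S i : ℝ)) *
          ∏ S ∈ D, (z S i : ℝ) := by
      exact_mod_cast hIH i
    have e3 : ((∏ S ∈ A, (u S i : ℝ) / (nn i : ℝ)) *
        ∏ S ∈ X, ((v S i : ℝ) * (w S i : ℝ)) / (nn i : ℝ)) * ∏ S ∈ D, (z S i : ℝ) =
        (((∏ S ∈ A, (u S i : ℝ)) * ∏ S ∈ X, (v S i : ℝ) * (w S i : ℝ)) *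
          ∏ S ∈ D, (z S i : ℝ)) / (nn i : ℝ) ^ K := by
      rw [Finset.prod_div_distrib, Finset.prod_div_distrib, Finset.prod_const,
        Finset.prod_const, hKdef, pow_add]
      field_simp
    rw [e3]
    rw [div_le_div_iff₀ (pow_pos hN0 _) (pow_pos (hnn0 i) _)]
    have hle1 : (nn i : ℝ) ^ K ≤ (nn i : ℝ) ^ t * N ^ (K - t) := by
      have h4 : (nn i : ℝ) ^ K = (nn i : ℝ) ^ t * (nn i : ℝ) ^ (K - t) := by
        rw [← pow_add]
        congr 1
        omega
      rw [h4]
      refine mul_le_mul_of_nonneg_left (pow_le_pow_left₀ (hnn0 i).le ?_ _) (by positivity)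
      rw [hN]
      exact Finset.single_le_sum (fun j _ => (hnn0 j).le) (mem_univ i)
    calc (1:ℝ) * (nn i : ℝ) ^ K = (nn i : ℝ) ^ K := one_mul _
      _ ≤ (nn i : ℝ) ^ t * N ^ (K - t) := hle1
      _ ≤ _ := by
          refine mul_le_mul_of_nonneg_right hnum (by positivity)
  -- splitting and combining the big product
  have hbig : N ^ K * ((1:ℝ) / N ^ (K - t)) ≤
      (∏ S ∈ A, (χA S : ℝ)) * (∏ S ∈ X, (χX S : ℝ) * (χY S : ℝ)) *
        ∏ S ∈ D, (χD S : ℝ) := by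
    have hA' : ∏ S ∈ A, (N * ∏ i, ((u S i : ℝ) / (nn i : ℝ)) ^ (θ i)) ≤
        ∏ S ∈ A, (χA S : ℝ) := by
      refine Finset.prod_le_prod (fun S _ => by positivity) hMainA
    have hX' : ∏ S ∈ X, (N * ∏ i, (((v S i : ℝ) * (w S i : ℝ)) / (nn i : ℝ)) ^ (θ i)) ≤
        ∏ S ∈ X, ((χX S : ℝ) * (χY S : ℝ)) := by
      refine Finset.prod_le_prod (fun S _ => by positivity) hMainX
    have hD' : ∏ S ∈ D, (∏ i, (z S i : ℝ) ^ (θ i)) ≤ ∏ S ∈ D, (χD S : ℝ) := by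
      refine Finset.prod_le_prod (fun S _ => by positivity) hMainD
    have hcomb : N ^ K * ((1:ℝ) / N ^ (K - t)) ≤
        (∏ S ∈ A, (N * ∏ i, ((u S i : ℝ) / (nn i : ℝ)) ^ (θ i))) *
        (∏ S ∈ X, (N * ∏ i, (((v S i : ℝ) * (w S i : ℝ)) / (nn i : ℝ)) ^ (θ i))) *
        ∏ S ∈ D, (∏ i, (z S i : ℝ) ^ (θ i)) := by
      rw [Finset.prod_mul_distrib, Finset.prod_mul_distrib, Finset.prod_const,
        Finset.prod_const]
      have e4 : (N ^ A.card * ∏ S ∈ A, ∏ i, ((u S i : ℝ) / (nn i : ℝ)) ^ (θ i)) *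
          (N ^ X.card * ∏ S ∈ X, ∏ i, (((v S i : ℝ) * (w S i : ℝ)) / (nn i : ℝ)) ^ (θ i)) *
          ∏ S ∈ D, ∏ i, (z S i : ℝ) ^ (θ i) =
          N ^ K * ((∏ S ∈ A, ∏ i, ((u S i : ℝ) / (nn i : ℝ)) ^ (θ i)) *
          (∏ S ∈ X, ∏ i, (((v S i : ℝ) * (w S i : ℝ)) / (nn i : ℝ)) ^ (θ i)) *
          ∏ S ∈ D, ∏ i, (z S i : ℝ) ^ (θ i)) := by
        rw [hKdef, pow_add]
        ring
      rw [e4]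
      refine mul_le_mul_of_nonneg_left ?_ (by positivity)
      -- swap products and use hGi
      rw [Finset.prod_comm (s := A), Finset.prod_comm (s := X), Finset.prod_comm (s := D)]
      rw [← Finset.prod_mul_distrib, ← Finset.prod_mul_distrib]
      have e5 : ∀ i ∈ (univ : Finset ι),
          ((1:ℝ) / N ^ (K - t)) ^ (θ i) ≤
          (∏ S ∈ A, ((u S i : ℝ) / (nn i : ℝ)) ^ (θ i)) *
          (∏ S ∈ X, (((v S i : ℝ) * (w S i : ℝ)) / (nn i : ℝ)) ^ (θ i)) *
          ∏ S ∈ D, (z S i : ℝ) ^ (θ i) := by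
        intro i _
        rw [Real.finset_prod_rpow A _ (fun S _ => by positivity) (θ i),
          Real.finset_prod_rpow X _ (fun S _ => by positivity) (θ i),
          Real.finset_prod_rpow D _ (fun S _ => by positivity) (θ i)]
        rw [← Real.mul_rpow (by positivity) (by positivity),
          ← Real.mul_rpow (by positivity) (by positivity)]
        exact Real.rpow_le_rpow (by positivity) (hGi i) (hθ0 i).le
      calc (1:ℝ) / N ^ (K - t) =
            ∏ i, ((1:ℝ) / N ^ (K - t)) ^ (θ i) := by
            rw [← Real.rpow_sum_of_pos (by positivity) θ univ, hθsum, Real.rpow_one]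
        _ ≤ _ := Finset.prod_le_prod (fun i _ => by positivity) e5
    calc N ^ K * ((1:ℝ) / N ^ (K - t)) ≤ _ := hcomb
      _ ≤ _ := by
          refine mul_le_mul (mul_le_mul hA' hX' (by positivity) (by positivity)) hD'
            (by positivity) (by positivity)
  have hfinal : N ^ t = N ^ K * ((1:ℝ) / N ^ (K - t)) := by
    rw [show K = t + (K - t) by omega, pow_add]
    field_simp
    rw [Nat.add_sub_cancel_left]
  calc (∑ i, (nn i : ℝ)) ^ t = N ^ t := by rw [hN]
    _ = N ^ K * ((1:ℝ) / N ^ (K - t)) := hfinal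
    _ ≤ _ := hbig

end NUM

section Main

variable {s : ℕ}

/-- counting: the number of `s`-subsets containing `a` is at least `(r-1).choose (s-1)` -/
lemma count_ge (hs : 0 < s) (a : Fin r) :
    (r - 1).choose (s - 1) ≤
      ((powersetCard s (univ : Finset (Fin r))).filter (fun S => a ∈ S)).card := by
  have hinj : ∀ T ∈ powersetCard (s - 1) ((univ : Finset (Fin r)).erase a),
      insert a T ∈ (powersetCard s (univ : Finset (Fin r))).filter (fun S => a ∈ S) := by
    intro T hT
    rw [Finset.mem_powersetCard] at hT
    rw [Finset.mem_filter, Finset.mem_powersetCard]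
    have haT : a ∉ T := fun h => (Finset.mem_erase.1 (hT.1 h)).1 rfl
    refine ⟨⟨subset_univ _, ?_⟩, mem_insert_self a T⟩
    rw [Finset.card_insert_of_notMem haT, hT.2]
    omega
  have hcard := Finset.card_le_card_of_injOn _ hinj ?_
  · calc (r - 1).choose (s - 1) = (powersetCard (s - 1)
        ((univ : Finset (Fin r)).erase a)).card := by
          rw [Finset.card_powersetCard, Finset.card_erase_of_mem (mem_univ a),
            Finset.card_univ, Fintype.card_fin]
    _ ≤ _ := hcard
  · intro T₁ h₁ T₂ h₂ heq
    rw [Finset.mem_coe, Finset.mem_powersetCard] at h₁ h₂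
    have ha₁ : a ∉ T₁ := fun h => (Finset.mem_erase.1 (h₁.1 h)).1 rfl
    have ha₂ : a ∉ T₂ := fun h => (Finset.mem_erase.1 (h₂.1 h)).1 rfl
    rw [← Finset.erase_insert ha₁, ← Finset.erase_insert ha₂, heq]

/-- the swap map on color sets -/
def σmap (a b : Fin r) (S : Finset (Fin r)) : Finset (Fin r) := insert b (S.erase a)

lemma sig_inv (a b : Fin r) {S : Finset (Fin r)} (ha : a ∈ S) (hb : b ∉ S) :
    σmap b a (σmap a b S) = S := by
  simp only [σmap]
  rw [Finset.erase_insert (fun h => hb (Finset.mem_of_mem_erase h)),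
    Finset.insert_erase ha]

lemma sig_mem (a b : Fin r) {S : Finset (Fin r)}
    (h : S ∈ (powersetCard s (univ : Finset (Fin r))).filter (fun S => a ∈ S ∧ b ∉ S)) :
    σmap a b S ∈ (powersetCard s (univ : Finset (Fin r))).filter
      (fun S => a ∉ S ∧ b ∈ S) := by
  rw [Finset.mem_filter, Finset.mem_powersetCard_univ] at h ⊢
  obtain ⟨hcard, haS, hbS⟩ := h
  have hab : a ≠ b := fun hh => hbS (hh ▸ haS)
  refine ⟨?_, ?_, ?_⟩
  · simp only [σmap]
    rw [Finset.card_insert_of_notMem (fun hh => hbS (Finset.mem_of_mem_erase hh)),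
      Finset.card_erase_of_mem haS]
    have h1 : 1 ≤ S.card := Finset.card_pos.2 ⟨a, haS⟩
    omega
  · simp only [σmap]
    intro hh
    rcases Finset.mem_insert.1 hh with hh | hh
    · exact hab hh
    · exact (Finset.mem_erase.1 hh).1 rfl
  · exact Finset.mem_insert_self b _

lemma sig_mem_and (a b : Fin r) {S : Finset (Fin r)}
    (h : S ∈ (powersetCard s (univ : Finset (Fin r))).filter (fun S => a ∈ S ∧ b ∉ S)) :
    a ∉ σmap a b S ∧ b ∈ σmap a b S := by
  have := sig_mem a b h
  rw [Finset.mem_filter] at this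
  exact this.2

lemma prod_FY_eq {M : Type} [CommMonoid M] (a b : Fin r) (g : Finset (Fin r) → M) :
    ∏ S ∈ (powersetCard s (univ : Finset (Fin r))).filter (fun S => a ∉ S ∧ b ∈ S), g S =
    ∏ S ∈ (powersetCard s (univ : Finset (Fin r))).filter (fun S => a ∈ S ∧ b ∉ S),
      g (σmap a b S) := by
  refine Finset.prod_bij' (i := fun S _ => σmap b a S) (j := fun S _ => σmap a b S)
    ?_ ?_ ?_ ?_ ?_
  · intro S hS
    have hS' : S ∈ (powersetCard s (univ : Finset (Fin r))).filter
        (fun S => b ∈ S ∧ a ∉ S) := by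
      rw [Finset.mem_filter] at hS ⊢
      exact ⟨hS.1, hS.2.2, hS.2.1⟩
    have := sig_mem b a hS'
    rw [Finset.mem_filter] at this ⊢
    exact ⟨this.1, this.2.2, this.2.1⟩
  · intro S hS
    exact sig_mem a b hS
  · intro S hS
    rw [Finset.mem_filter] at hS
    exact sig_inv b a hS.2.2 hS.2.1
  · intro S hS
    rw [Finset.mem_filter] at hS
    exact sig_inv a b hS.2.1 hS.2.2
  · intro S hS
    rw [Finset.mem_filter] at hS
    rw [sig_inv b a hS.2.2 hS.2.1]

lemma prod_split {M : Type} [CommMonoid M] (a b : Fin r) (g : Finset (Fin r) → M) :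
    ∏ S ∈ powersetCard s (univ : Finset (Fin r)), g S =
    (∏ S ∈ (powersetCard s (univ : Finset (Fin r))).filter (fun S => a ∈ S ∧ b ∈ S), g S) *
     (∏ S ∈ (powersetCard s (univ : Finset (Fin r))).filter (fun S => a ∈ S ∧ b ∉ S), g S) *
    ((∏ S ∈ (powersetCard s (univ : Finset (Fin r))).filter (fun S => a ∉ S ∧ b ∈ S), g S) *
     ∏ S ∈ (powersetCard s (univ : Finset (Fin r))).filter (fun S => a ∉ S ∧ b ∉ S), g S) := by
  rw [← Finset.prod_filter_mul_prod_filter_not (powersetCard s (univ : Finset (Fin r)))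
    (fun S => a ∈ S) g]
  congr 1
  · rw [← Finset.prod_filter_mul_prod_filter_not
      ((powersetCard s (univ : Finset (Fin r))).filter (fun S => a ∈ S)) (fun S => b ∈ S) g,
      Finset.filter_filter, Finset.filter_filter]
  · rw [← Finset.prod_filter_mul_prod_filter_not
      ((powersetCard s (univ : Finset (Fin r))).filter (fun S => ¬ a ∈ S)) (fun S => b ∈ S) g,
      Finset.filter_filter, Finset.filter_filter]

lemma card_split (a b : Fin r) :
    ((powersetCard s (univ : Finset (Fin r))).filter (fun S => a ∈ S)).card =
    ((powersetCard s (univ : Finset (Fin r))).filter (fun S => a ∈ S ∧ b ∈ S)).card +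
    ((powersetCard s (univ : Finset (Fin r))).filter (fun S => a ∈ S ∧ b ∉ S)).card := by
  have h := Finset.card_filter_add_card_filter_not
    (s := (powersetCard s (univ : Finset (Fin r))).filter (fun S => a ∈ S))
    (p := fun S => b ∈ S)
  rw [Finset.filter_filter, Finset.filter_filter] at h
  omega

/-- the main induction -/
lemma main_ind (hs : 0 < s) (hsr : s ≤ r) : ∀ (k : ℕ) (V : Type) [Fintype V]
    [DecidableEq V] (c : V → V → Fin r), Fintype.card V = k → Sym c → NR c →
    Fintype.card V ^ ((r - 1).choose (s - 1)) ≤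
      ∏ S ∈ powersetCard s (univ : Finset (Fin r)), chi (Gg c S) := by
  intro k
  induction k using Nat.strong_induction_on with
  | _ k IH =>
  intro V _ _ c hcard hc hnr
  rcases Nat.lt_or_ge (Fintype.card V) 2 with h2 | h2
  · rcases Nat.lt_or_ge (Fintype.card V) 1 with h1 | h1
    · have h0 : Fintype.card V = 0 := by omega
      rw [h0, zero_pow]
      · exact Nat.zero_le _
      · have := Nat.choose_pos (show s - 1 ≤ r - 1 by omega)
        omega
    · have hne : Nonempty V := Fintype.card_pos_iff.1 (by omega)
      have h1' : Fintype.card V = 1 := by omega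
      rw [h1', one_pow]
      exact Finset.one_le_prod' (fun S _ => chi_pos _)
  · obtain ⟨gp⟩ := gallai_partition k V c hcard h2 hc hnr
    have hmne : Nonempty (Fin gp.m) := ⟨⟨0, by have := gp.hm; omega⟩⟩
    have hnempty : ∀ i, Nonempty {v : V // gp.P v = i} := by
      intro i
      obtain ⟨w, hw⟩ := gp.hsurj i
      exact ⟨⟨w, hw⟩⟩
    have hnn1 : ∀ i, 1 ≤ Fintype.card {v : V // gp.P v = i} := by
      intro i
      exact Fintype.card_pos_iff.2 (hnempty i)
    have hsumn : ∑ i, Fintype.card {v : V // gp.P v = i} = Fintype.card V := by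
      have h := Finset.card_eq_sum_card_fiberwise
        (f := gp.P) (s := (univ : Finset V)) (t := (univ : Finset (Fin gp.m)))
        (fun x _ => mem_univ _)
      rw [Finset.card_univ] at h
      rw [h]
      refine Finset.sum_congr rfl ?_
      intro i _
      rw [Fintype.card_subtype]
    have hlt : ∀ i, Fintype.card {v : V // gp.P v = i} < k := by
      intro i
      have : Nontrivial (Fin gp.m) := Fin.nontrivial_iff_two_le.2 gp.hm
      obtain ⟨j, hj⟩ := exists_ne i
      obtain ⟨w, hw⟩ := gp.hsurj j
      rw [← hcard]
      refine Fintype.card_subtype_lt (x := w) ?_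
      rw [hw]
      exact hj
    have hIH : ∀ i, Fintype.card {v : V // gp.P v = i} ^ ((r - 1).choose (s - 1)) ≤
        ∏ S ∈ powersetCard s (univ : Finset (Fin r)),
          chi (Gg (res c (fun v => gp.P v = i)) S) := by
      intro i
      exact IH _ (hlt i) _ (res c (fun v => gp.P v = i)) rfl (res_sym hc _) (res_nr hnr _)
    -- NUM setup
    have hsplit_res : ∀ i, ∏ S ∈ powersetCard s (univ : Finset (Fin r)),
        chi (Gg (res c (fun v => gp.P v = i)) S) =
        ((∏ S ∈ (powersetCard s (univ : Finset (Fin r))).filter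
            (fun S => gp.a ∈ S ∧ gp.b ∈ S), chi (Gg (res c (fun v => gp.P v = i)) S)) *
          ∏ S ∈ (powersetCard s (univ : Finset (Fin r))).filter
            (fun S => gp.a ∈ S ∧ gp.b ∉ S),
            chi (Gg (res c (fun v => gp.P v = i)) S) *
            chi (Gg (res c (fun v => gp.P v = i)) (σmap gp.a gp.b S))) *
          ∏ S ∈ (powersetCard s (univ : Finset (Fin r))).filter
            (fun S => gp.a ∉ S ∧ gp.b ∉ S), chi (Gg (res c (fun v => gp.P v = i)) S) := by
      intro i
      rw [prod_split gp.a gp.b, prod_FY_eq gp.a gp.b, Finset.prod_mul_distrib]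
      ring
    have hsplit_chi : ∏ S ∈ powersetCard s (univ : Finset (Fin r)), chi (Gg c S) =
        ((∏ S ∈ (powersetCard s (univ : Finset (Fin r))).filter
            (fun S => gp.a ∈ S ∧ gp.b ∈ S), chi (Gg c S)) *
          ∏ S ∈ (powersetCard s (univ : Finset (Fin r))).filter
            (fun S => gp.a ∈ S ∧ gp.b ∉ S),
            chi (Gg c S) * chi (Gg c (σmap gp.a gp.b S))) *
          ∏ S ∈ (powersetCard s (univ : Finset (Fin r))).filter
            (fun S => gp.a ∉ S ∧ gp.b ∉ S), chi (Gg c S) := by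
      rw [prod_split gp.a gp.b, prod_FY_eq gp.a gp.b, Finset.prod_mul_distrib]
      ring
    rw [hsplit_chi, ← hsumn]
    refine NUM ((r - 1).choose (s - 1)) (fun i => Fintype.card {v : V // gp.P v = i})
      hnn1 _ _ _
      (fun S i => chi (Gg (res c (fun v => gp.P v = i)) S))
      (fun S i => chi (Gg (res c (fun v => gp.P v = i)) S))
      (fun S i => chi (Gg (res c (fun v => gp.P v = i)) (σmap gp.a gp.b S)))
      (fun S i => chi (Gg (res c (fun v => gp.P v = i)) S))
      (fun S => chi (Gg c S)) (fun S => chi (Gg c S))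
      (fun S => chi (Gg c (σmap gp.a gp.b S))) (fun S => chi (Gg c S))
      ?_ ?_ ?_ ?_ ?_ ?_ ?_ ?_
    · intro S hS
      rw [Finset.mem_filter] at hS
      exact sum_chi_le gp S hS.2.1 hS.2.2
    · intro S hS
      rw [Finset.mem_filter] at hS
      exact pair_chi_le gp S (σmap gp.a gp.b S) hS.2.1 (Finset.mem_insert_self gp.b _)
    · intro S hS i
      exact chi_res_le _
    · intro S _ i
      have : Nonempty {v : V // gp.P v = i} := hnempty i
      exact chi_pos _
    · intro S _ i
      have : Nonempty {v : V // gp.P v = i} := hnempty i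
      have h1 := chi_pos (Gg (res c (fun v => gp.P v = i)) S)
      have h2 := chi_pos (Gg (res c (fun v => gp.P v = i)) (σmap gp.a gp.b S))
      calc 1 = 1 * 1 := rfl
        _ ≤ _ := Nat.mul_le_mul h1 h2
    · intro S _ i
      have : Nonempty {v : V // gp.P v = i} := hnempty i
      exact chi_pos _
    · calc (r - 1).choose (s - 1) ≤
          ((powersetCard s (univ : Finset (Fin r))).filter (fun S => gp.a ∈ S)).card :=
            count_ge hs gp.a
        _ = _ := card_split gp.a gp.b
    · intro i
      rw [← hsplit_res i]
      exact hIH i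

end Main

end GallaiWork

/-- Given a Gallai `r`-coloring of `K_n` (positive integers `s ≤ r`, `n ≥ 1`), the
product over all `s`-element color sets `S` of the chromatic numbers `χ(G_S)` is at
least `n ^ (r-1 choose s-1)`. Colors are elements of `Fin r`. -/
theorem stmt_2 (r s n : ℕ) (hr : 0 < r) (hs : 0 < s) (hn : 0 < n) (hsr : s ≤ r)
    (c : Fin n → Fin n → Fin r)
    (hsym : ∀ u v, c u v = c v u)
    (hGallai : ∀ u v w : Fin n, u ≠ v → v ≠ w → u ≠ w →
      ¬(c u v ≠ c v w ∧ c v w ≠ c u w ∧ c u v ≠ c u w)) :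
    (n : ℕ∞) ^ (Nat.choose (r - 1) (s - 1)) ≤
      ∏ S ∈ Finset.powersetCard s (Finset.univ : Finset (Fin r)),
        (SimpleGraph.fromRel fun u v => c u v ∈ S).chromaticNumber := by
  classical
  have hSym : GallaiWork.Sym c := hsym
  have hNR : GallaiWork.NR c := by
    intro u v w huv hvw huw
    have h := hGallai u v w huv hvw huw
    by_contra hcon
    push_neg at hcon
    exact h ⟨hcon.1, hcon.2.1, hcon.2.2⟩
  have hmain := GallaiWork.main_ind (r := r) (s := s) hs hsr n (Fin n) c (by simp)
    hSym hNR
  rw [Fintype.card_fin] at hmain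
  have hchain : ∀ S ∈ Finset.powersetCard s (Finset.univ : Finset (Fin r)),
      ((GallaiWork.chi (GallaiWork.Gg c S) : ℕ∞)) ≤
        (SimpleGraph.fromRel fun u v => c u v ∈ S).chromaticNumber :=
    fun S _ => GallaiWork.chi_cast_le _
  calc (n : ℕ∞) ^ (Nat.choose (r - 1) (s - 1))
      = ((n ^ (Nat.choose (r - 1) (s - 1)) : ℕ) : ℕ∞) := by push_cast; rfl
    _ ≤ ((∏ S ∈ Finset.powersetCard s (Finset.univ : Finset (Fin r)),
          GallaiWork.chi (GallaiWork.Gg c S) : ℕ) : ℕ∞) := by exact_mod_cast hmain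
    _ = ∏ S ∈ Finset.powersetCard s (Finset.univ : Finset (Fin r)),
          ((GallaiWork.chi (GallaiWork.Gg c S) : ℕ∞)) := by push_cast; rfl
    _ ≤ _ := Finset.prod_le_prod' hchain
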